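/- Let ε ∈ ℝ and k₂ < 0. On any open interval I containing 0 contained in (−1/√(−k₂), 1/√(−k₂)) on which the expression 1 + ε( s√(1 + k₂ s²) + arcsin(√(−k₂) s)/√(−k₂) ) is positive, the function φ(s) := √( 1 + ε( s√(1 + k₂ s²) + arcsin(√(−k₂) s)/√(−k₂) ) ) satisfies equation (E) with parameters (k₁, k₂, k₃) = (0, k₂, 0), i.e. s k₂ (φφ' − s φ'² − s φφ'') − (φ'² + φφ'') = 0 on I; moreover φ(0) = 1 and φ'(0) = ε. -/

import Mathlib

/-- Equation (E) with parameters `k₁ k₂ k₃` for a real function `φ` at the point `s`: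
`s(k₂ − k₃ s²)(φφ' − s φ'² − s φφ'') − (φ'² + φφ'') + k₁ φ(φ − s φ') = 0`. -/
def eqE (k₁ k₂ k₃ : ℝ) (φ : ℝ → ℝ) (s : ℝ) : Prop :=
  s * (k₂ - k₃ * s ^ 2) *
      (φ s * deriv φ s - s * (deriv φ s) ^ 2 - s * φ s * deriv (deriv φ) s) -
    ((deriv φ s) ^ 2 + φ s * deriv (deriv φ) s) +
    k₁ * φ s * (φ s - s * deriv φ s) = 0

theorem stmt13 (ε k₂ : ℝ) (hk₂ : k₂ < 0) (a b : ℝ) (ha : a < 0) (hb : 0 < b)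
    (hsub : Set.Ioo a b ⊆ Set.Ioo (-(1 / Real.sqrt (-k₂))) (1 / Real.sqrt (-k₂)))
    (hpos : ∀ s ∈ Set.Ioo a b,
      0 < 1 + ε * (s * Real.sqrt (1 + k₂ * s ^ 2) +
        Real.arcsin (Real.sqrt (-k₂) * s) / Real.sqrt (-k₂))) :
    (∀ s ∈ Set.Ioo a b,
      eqE 0 k₂ 0
        (fun t => Real.sqrt (1 + ε * (t * Real.sqrt (1 + k₂ * t ^ 2) +
          Real.arcsin (Real.sqrt (-k₂) * t) / Real.sqrt (-k₂)))) s) ∧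
    (fun t => Real.sqrt (1 + ε * (t * Real.sqrt (1 + k₂ * t ^ 2) +
      Real.arcsin (Real.sqrt (-k₂) * t) / Real.sqrt (-k₂)))) 0 = 1 ∧
    deriv (fun t => Real.sqrt (1 + ε * (t * Real.sqrt (1 + k₂ * t ^ 2) +
      Real.arcsin (Real.sqrt (-k₂) * t) / Real.sqrt (-k₂)))) 0 = ε := by
  have hck : (0:ℝ) < -k₂ := by linarith
  set c := Real.sqrt (-k₂) with hc_def
  have hc : 0 < c := Real.sqrt_pos.2 hck
  have hc2 : c ^ 2 = -k₂ := Real.sq_sqrt hck.le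
  set g : ℝ → ℝ := fun t => 1 + ε * (t * Real.sqrt (1 + k₂ * t ^ 2) +
      Real.arcsin (c * t) / c) with hg_def
  set φ : ℝ → ℝ := fun t => Real.sqrt (1 + ε * (t * Real.sqrt (1 + k₂ * t ^ 2) +
      Real.arcsin (c * t) / c)) with hφ_def
  have hφg : ∀ t, φ t = Real.sqrt (g t) := fun t => rfl
  -- basic facts on the interval
  have hu : ∀ s ∈ Set.Ioo a b, 0 < 1 + k₂ * s ^ 2 := by
    intro s hs
    obtain ⟨hs1, hs2⟩ := hsub hs
    have h1 : c * s < 1 := by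
      have := (lt_div_iff₀ hc).1 hs2
      linarith [this]
    have h2 : -1 < c * s := by
      have h := mul_lt_mul_of_pos_left hs1 hc
      rw [mul_neg, mul_one_div, div_self hc.ne'] at h
      linarith
    nlinarith [sq_nonneg (c*s)]
  -- derivative of g
  have hgd : ∀ s ∈ Set.Ioo a b,
      HasDerivAt g (2 * ε * Real.sqrt (1 + k₂ * s ^ 2)) s := by
    intro s hs
    obtain ⟨hs1, hs2⟩ := hsub hs
    have h1 : c * s < 1 := by
      have := (lt_div_iff₀ hc).1 hs2
      linarith [this]
    have h2 : -1 < c * s := by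
      have h := mul_lt_mul_of_pos_left hs1 hc
      rw [mul_neg, mul_one_div, div_self hc.ne'] at h
      linarith
    have hus := hu s hs
    set q := Real.sqrt (1 + k₂ * s ^ 2) with hq_def
    have hqpos : 0 < q := Real.sqrt_pos.2 hus
    have hq2 : q ^ 2 = 1 + k₂ * s ^ 2 := Real.sq_sqrt hus.le
    have d1 : HasDerivAt (fun t : ℝ => 1 + k₂ * t ^ 2) (k₂ * (2 * s)) s := by
      simpa using ((hasDerivAt_pow 2 s).const_mul k₂).const_add 1
    have d2 : HasDerivAt (fun t : ℝ => Real.sqrt (1 + k₂ * t ^ 2)) (k₂ * s / q) s := by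
      have := (Real.hasDerivAt_sqrt hus.ne').comp s d1
      refine this.congr_deriv ?_
      field_simp
      ring
    have d3 : HasDerivAt (fun t : ℝ => t * Real.sqrt (1 + k₂ * t ^ 2))
        (1 * q + s * (k₂ * s / q)) s := (hasDerivAt_id s).mul d2
    have d4 : HasDerivAt (fun t : ℝ => Real.arcsin (c * t))
        (1 / Real.sqrt (1 - (c * s) ^ 2) * c) s := by
      have hlin : HasDerivAt (fun t : ℝ => c * t) c s := by
        simpa using (hasDerivAt_id s).const_mul c
      exact (Real.hasDerivAt_arcsin (by nlinarith) (by nlinarith)).comp s hlin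
    have hsq : Real.sqrt (1 - (c * s) ^ 2) = q := by
      rw [hq_def]
      congr 1
      linear_combination -s ^ 2 * hc2
    rw [hsq] at d4
    have d5 : HasDerivAt g
        (ε * ((1 * q + s * (k₂ * s / q)) + (1 / q * c) / c)) s :=
      ((d3.add (d4.div_const c)).const_mul ε).const_add 1
    convert d5 using 1
    field_simp
    linear_combination ε * hq2
  -- derivative of φ
  have hφd : ∀ s ∈ Set.Ioo a b,
      HasDerivAt φ (ε * Real.sqrt (1 + k₂ * s ^ 2) / Real.sqrt (g s)) s := by
    intro s hs
    have hgs := hpos s hs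
    have hp : Real.sqrt (g s) ≠ 0 := (Real.sqrt_pos.2 hgs).ne'
    have h := (Real.hasDerivAt_sqrt (ne_of_gt hgs)).comp s (hgd s hs)
    have key : ∀ P Q : ℝ, P ≠ 0 → 1 / (2 * P) * (2 * ε * Q) = ε * Q / P := by
      intro P Q hP; field_simp
    rw [key (Real.sqrt (g s)) (Real.sqrt (1 + k₂ * s ^ 2)) hp] at h
    exact h
  have h0 : (0:ℝ) ∈ Set.Ioo a b := ⟨ha, hb⟩
  have hg0 : g 0 = 1 := by simp [hg_def]
  refine ⟨?_, ?_, ?_⟩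
  · intro s hs
    have hgs := hpos s hs
    have hus := hu s hs
    set q := Real.sqrt (1 + k₂ * s ^ 2) with hq_def
    set p := Real.sqrt (g s) with hp_def
    have hqpos : 0 < q := Real.sqrt_pos.2 hus
    have hppos : 0 < p := Real.sqrt_pos.2 hgs
    have hq2 : q ^ 2 = 1 + k₂ * s ^ 2 := Real.sq_sqrt hus.le
    have hp2 : p ^ 2 = g s := Real.sq_sqrt hgs.le
    -- second derivative via the function F
    set F : ℝ → ℝ := fun t => ε * Real.sqrt (1 + k₂ * t ^ 2) / Real.sqrt (g t) with hF_def
    have hFd : HasDerivAt F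
        ((ε * (k₂ * s / q) * p - ε * q * (ε * q / p)) / p ^ 2) s := by
      have hnum : HasDerivAt (fun t : ℝ => ε * Real.sqrt (1 + k₂ * t ^ 2))
          (ε * (k₂ * s / q)) s := by
        have hus' := hus
        have d1 : HasDerivAt (fun t : ℝ => 1 + k₂ * t ^ 2) (k₂ * (2 * s)) s := by
          simpa using ((hasDerivAt_pow 2 s).const_mul k₂).const_add 1
        have d2 : HasDerivAt (fun t : ℝ => Real.sqrt (1 + k₂ * t ^ 2)) (k₂ * s / q) s := by
          have := (Real.hasDerivAt_sqrt hus.ne').comp s d1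
          refine this.congr_deriv ?_
          field_simp
          ring
        exact d2.const_mul ε
      have hden : HasDerivAt (fun t : ℝ => Real.sqrt (g t)) (ε * q / p) s := hφd s hs
      exact hnum.div hden hppos.ne'
    have hd1 : deriv φ s = ε * q / p := (hφd s hs).deriv
    have hd2 : deriv (deriv φ) s =
        (ε * (k₂ * s / q) * p - ε * q * (ε * q / p)) / p ^ 2 := by
      have heq : deriv φ =ᶠ[nhds s] F := by
        refine Filter.eventuallyEq_of_mem (isOpen_Ioo.mem_nhds hs) ?_
        intro x hx
        exact (hφd x hx).deriv
      rw [heq.deriv_eq]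
      exact hFd.deriv
    have hφs : φ s = p := hφg s
    unfold eqE
    rw [hd1, hd2, hφs]
    field_simp
    linear_combination (ε * s * k₂ * p ^ 2) * hq2
  · show φ 0 = 1
    rw [hφg, hg0, Real.sqrt_one]
  · have := (hφd 0 h0).deriv
    rw [this, hg0]
    norm_num
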